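/- Let O be a discrete valuation ring with maximal ideal m and fraction field F, let F̄ be an algebraic closure of F, and let n ≥ 1. For Z ∈ Mₙ(F), the following are equivalent: (a) there exists g ∈ GLₙ(F̄) such that every entry of gZg⁻¹ − Y lies in m; (b) the minimal polynomial of Z equals its characteristic polynomial, and every coefficient of degree < n of the characteristic polynomial of Z lies in m. -/

import Mathlib

open IsLocalRing

/-- The regular nilpotent matrix `Y` with `(i, i+1)`-entries equal to `1` and all
other entries `0`. -/
def Ymat (n : ℕ) (R : Type*) [CommRing R] : Matrix (Fin n) (Fin n) R :=
  fun i j => if (j : ℕ) = (i : ℕ) + 1 then 1 else 0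

open Polynomial Matrix

section auxYmat
variable {R S : Type*} [CommRing R] [CommRing S] {n : ℕ}

lemma Ymat_map (f : R →+* S) : (Ymat n R).map f = Ymat n S := by
  ext i j
  simp [Ymat, Matrix.map_apply, apply_ite f]

lemma Ymat_charpoly : (Ymat n R).charpoly = X ^ n := by
  rw [Matrix.charpoly_of_upperTriangular]
  · simp [Ymat]
  · intro i j hij
    have hij' : (j : ℕ) < (i : ℕ) := hij
    simp only [Ymat, ite_eq_right_iff]
    intro h
    exact absurd h (by omega)

lemma Ymat_pow_mulVec (k : ℕ) :
    (Ymat n R ^ k) *ᵥ (fun i : Fin n => if (i : ℕ) = n - 1 then 1 else 0) =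
      fun i : Fin n => if (i : ℕ) + k = n - 1 then 1 else 0 := by
  induction k with
  | zero =>
    funext i
    simp [Matrix.one_mulVec]
  | succ k ih =>
    rw [pow_succ', ← Matrix.mulVec_mulVec, ih]
    funext i
    simp only [Matrix.mulVec, dotProduct, Ymat]
    by_cases hi : (i : ℕ) + 1 < n
    · rw [Finset.sum_eq_single (⟨(i : ℕ) + 1, hi⟩ : Fin n)]
      · simp only [if_pos rfl, one_mul]
        rw [show ((⟨(i:ℕ)+1, hi⟩ : Fin n) : ℕ) + k = (i:ℕ) + (k+1) by simp; omega]
        simp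
      · intro b _ hb
        rw [if_neg, zero_mul]
        intro h
        exact hb (Fin.ext h)
      · intro h; exact absurd (Finset.mem_univ _) h
    · rw [Finset.sum_eq_zero, if_neg (by omega)]
      intro b _
      rw [if_neg (by omega), zero_mul]

end auxYmat

section conj
variable {R A : Type*} [CommSemiring R] [Semiring A] [Algebra R A]

/-- Conjugation by a unit as an algebra homomorphism. -/
def conjAlgHom (u : Aˣ) : A →ₐ[R] A where
  toFun x := ↑u * x * ↑u⁻¹
  map_one' := by simp
  map_mul' x y := by
    show ↑u * (x * y) * ↑u⁻¹ = ↑u * x * ↑u⁻¹ * (↑u * y * ↑u⁻¹)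
    simp only [mul_assoc, Units.inv_mul_cancel_left]
  map_zero' := by simp
  map_add' x y := by
    show ↑u * (x + y) * ↑u⁻¹ = ↑u * x * ↑u⁻¹ + ↑u * y * ↑u⁻¹
    rw [mul_add, add_mul]
  commutes' r := by
    show ↑u * algebraMap R A r * ↑u⁻¹ = algebraMap R A r
    rw [← Algebra.commutes r (↑u : A), mul_assoc, u.mul_inv, mul_one]

lemma conjAlgHom_apply (u : Aˣ) (x : A) : conjAlgHom (R := R) u x = ↑u * x * ↑u⁻¹ := rfl

/-- `aeval` commutes with conjugation. -/
lemma aeval_units_conj (u : Aˣ) (x : A) (p : R[X]) :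
    aeval ((u : A) * x * (↑u⁻¹ : A)) p = ↑u * aeval x p * ↑u⁻¹ := by
  rw [← conjAlgHom_apply (R := R) u x, Polynomial.aeval_algHom_apply, conjAlgHom_apply]

end conj

section charconj
variable {R : Type*} [CommRing R] {n : Type*} [DecidableEq n] [Fintype n]

lemma charpoly_units_conj (u : (Matrix n n R)ˣ) (M : Matrix n n R) :
    ((u : Matrix n n R) * M * (↑u⁻¹ : Matrix n n R)).charpoly = M.charpoly := by
  let f : Matrix n n R →+* Matrix n n R[X] :=
    (RingHom.mapMatrix (C : R →+* R[X]))
  have key : Matrix.charmatrix ((u : Matrix n n R) * M * (↑u⁻¹ : Matrix n n R))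
      = f u * Matrix.charmatrix M * f ↑u⁻¹ := by
    rw [charmatrix, charmatrix]
    have h1 : f ↑u * Matrix.scalar n (X : R[X]) * f ↑u⁻¹ = Matrix.scalar n (X : R[X]) := by
      rw [(Matrix.scalar_commute (X : R[X]) (Commute.all X) (f ↑u)).symm.eq, mul_assoc,
        ← map_mul f, u.mul_inv, map_one f, mul_one]
    rw [mul_sub, sub_mul, h1]
    congr 1
    simp only [f, RingHom.mapMatrix_apply, ← Matrix.map_mul]
  rw [charpoly, charpoly, key, Matrix.det_mul, Matrix.det_mul, mul_comm, ← mul_assoc,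
    ← Matrix.det_mul, ← map_mul f, u.inv_mul, map_one f, Matrix.det_one, one_mul]

end charconj

section mulvec
variable {R : Type*} [CommRing R] {n : ℕ}

lemma sum_mulVec {ι : Type*} (s : Finset ι) (f : ι → Matrix (Fin n) (Fin n) R)
    (v : Fin n → R) : (∑ k ∈ s, f k) *ᵥ v = ∑ k ∈ s, (f k) *ᵥ v := by
  funext i
  simp only [Matrix.mulVec, dotProduct, Finset.sum_apply, Matrix.sum_apply,
    Finset.sum_mul]
  rw [Finset.sum_comm]

/-- Evaluating a polynomial of degree `< n` at a matrix `A` and applying to a vector `v`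
is the same as multiplying the "Krylov matrix" of `A` and `v` by the coefficient vector. -/
lemma aeval_mulVec_eq (A : Matrix (Fin n) (Fin n) R) (v : Fin n → R) (p : R[X])
    (hp : p.natDegree < n) :
    (Polynomial.aeval A p) *ᵥ v =
      (Matrix.of fun i (k : Fin n) => ((A ^ (k : ℕ)) *ᵥ v) i) *ᵥ
        (fun k : Fin n => p.coeff (k : ℕ)) := by
  rw [aeval_eq_sum_range' hp]
  rw [_root_.sum_mulVec]
  funext i
  simp only [Finset.sum_apply, Matrix.smul_mulVec, Pi.smul_apply, smul_eq_mul]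
  rw [Matrix.mulVec, ← Fin.sum_univ_eq_sum_range (fun k => p.coeff k * ((A ^ k) *ᵥ v) i)]
  simp only [dotProduct, Matrix.of_apply]
  exact Finset.sum_congr rfl fun k _ => mul_comm _ _

lemma coeff_polyOf (x : Fin n → R) (j : ℕ) :
    (∑ k : Fin n, C (x k) * X ^ (k : ℕ)).coeff j =
      if h : j < n then x ⟨j, h⟩ else 0 := by
  rw [Polynomial.finset_sum_coeff]
  by_cases h : j < n
  · rw [dif_pos h, Finset.sum_eq_single (⟨j, h⟩ : Fin n)]
    · simp
    · intro b _ hb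
      simp only [coeff_C_mul, coeff_X_pow]
      rw [if_neg, mul_zero]
      exact fun hc => hb (Fin.ext hc.symm)
    · exact fun h' => absurd (Finset.mem_univ _) h'
  · rw [dif_neg h, Finset.sum_eq_zero]
    intro b _
    simp only [coeff_C_mul, coeff_X_pow]
    rw [if_neg (by omega), mul_zero]

lemma mulVec_map_apply {S : Type*} [CommRing S] (f : R →+* S) (M : Matrix (Fin n) (Fin n) R)
    (v : Fin n → R) (i : Fin n) : ((M.map f) *ᵥ (fun j => f (v j))) i = f ((M *ᵥ v) i) := by
  simp only [Matrix.mulVec, dotProduct, Matrix.map_apply]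
  rw [map_sum f]
  exact Finset.sum_congr rfl fun j _ => (map_mul f _ _).symm

lemma pow_map {S : Type*} [CommRing S] (f : R →+* S) (M : Matrix (Fin n) (Fin n) R) (k : ℕ) :
    (M.map f) ^ k = (M ^ k).map f := by
  have := map_pow (f.mapMatrix (m := Fin n)) M k
  simpa [RingHom.mapMatrix_apply] using this.symm

end mulvec

section cyclic

variable {K : Type*} [Field K] [Infinite K] {n : ℕ}

/-- If the minimal polynomial of a matrix has degree `n`, then over an infinite field there
is a cyclic vector: the Krylov matrix of some `v` is invertible. -/
lemma exists_cyclic (A : Matrix (Fin n) (Fin n) K) (hA : (minpoly K A).natDegree = n) :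
    ∃ v : Fin n → K, (Matrix.of fun i (k : Fin n) => ((A ^ (k : ℕ)) *ᵥ v) i).det ≠ 0 := by
  rcases Nat.eq_zero_or_pos n with hn | hn
  · subst hn
    exact ⟨0, by simp [Matrix.det_isEmpty]⟩
  classical
  by_contra hcon
  push_neg at hcon
  set μ := minpoly K A with hμ
  have hint : IsIntegral K A := IsIntegral.of_finite K A
  have hmono : μ.Monic := minpoly.monic hint
  have hμ0 : μ ≠ 0 := hmono.ne_zero
  have haμ : Polynomial.aeval A μ = 0 := minpoly.aeval K A
  -- the finite set of irreducible factors
  set S := (UniqueFactorizationMonoid.factors μ).toFinset with hS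
  have hdvd : ∀ c ∈ S, c ∣ μ := fun c hc =>
    UniqueFactorizationMonoid.dvd_of_mem_factors (Multiset.mem_toFinset.mp hc)
  -- the cofactor of each factor
  have hcompl : ∀ c : {c // c ∈ S}, ∃ t, μ = c.1 * t := fun c => hdvd c.1 c.2
  choose t ht using hcompl
  -- the proper subspaces
  set W : {c // c ∈ S} → Subspace K (Fin n → K) :=
    fun c => LinearMap.ker (Matrix.mulVecLin (Polynomial.aeval A (t c))) with hW
  -- each vector lies in one of them
  have hcover : ∀ v : Fin n → K, ∃ c, v ∈ W c := by
    intro v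
    obtain ⟨x, hx0, hxv⟩ := (Matrix.exists_mulVec_eq_zero_iff.mpr (hcon v))
    set q : K[X] := ∑ k : Fin n, C (x k) * X ^ (k : ℕ) with hq
    have hq0 : q ≠ 0 := by
      obtain ⟨k, hk⟩ := Function.ne_iff.mp hx0
      intro h
      apply hk
      have := coeff_polyOf x (k : ℕ)
      rw [← hq, h, coeff_zero] at this
      rw [dif_pos k.isLt] at this
      simpa using this.symm
    have hqdeg : q.natDegree < n := by
      by_contra hdeg
      push_neg at hdeg
      have h1 := coeff_polyOf x q.natDegree
      rw [← hq] at h1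
      rw [dif_neg (by omega)] at h1
      exact hq0 (Polynomial.leadingCoeff_eq_zero.mp h1)
    have hqv : (Polynomial.aeval A q) *ᵥ v = 0 := by
      rw [aeval_mulVec_eq A v q hqdeg]
      have : (fun k : Fin n => q.coeff (k : ℕ)) = x := by
        funext k
        rw [hq, coeff_polyOf, dif_pos k.isLt]
      rw [this, hxv]
    -- gcd with μ
    set g := EuclideanDomain.gcd q μ with hg
    have hgq : g ∣ q := EuclideanDomain.gcd_dvd_left q μ
    have hgμ : g ∣ μ := EuclideanDomain.gcd_dvd_right q μ
    have hg0 : g ≠ 0 := fun h => hq0 (EuclideanDomain.gcd_eq_zero_iff.mp h).1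
    have hgv : (Polynomial.aeval A g) *ᵥ v = 0 := by
      have hb : g = EuclideanDomain.gcdA q μ * q + EuclideanDomain.gcdB q μ * μ := by
        rw [hg, EuclideanDomain.gcd_eq_gcd_ab q μ]; ring
      rw [hb]
      simp only [_root_.map_add, _root_.map_mul, Matrix.add_mulVec]
      rw [haμ, mul_zero, ← Matrix.mulVec_mulVec, hqv, Matrix.mulVec_zero,
        Matrix.zero_mulVec, add_zero]
    have hgdeg : g.natDegree < n := lt_of_le_of_lt (Polynomial.natDegree_le_of_dvd hgq hq0) hqdeg
    -- μ = g * s with s not a unit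
    obtain ⟨s, hs⟩ := hgμ
    have hs0 : s ≠ 0 := fun h => hμ0 (by rw [hs, h, mul_zero])
    have hsnu : ¬IsUnit s := by
      intro hu
      have : s.natDegree = 0 := Polynomial.natDegree_eq_zero_of_isUnit hu
      have : μ.natDegree = g.natDegree := by
        rw [hs, Polynomial.natDegree_mul hg0 hs0, this, add_zero]
      omega
    obtain ⟨r, hr_irr, hr_dvd⟩ := WfDvdMonoid.exists_irreducible_factor hsnu hs0
    obtain ⟨c, hcmem, hassoc⟩ :=
      UniqueFactorizationMonoid.exists_mem_factors_of_dvd hμ0 hr_irr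
        (hr_dvd.trans ⟨g, by rw [hs]; ring⟩)
    have hcS : c ∈ S := Multiset.mem_toFinset.mpr hcmem
    refine ⟨⟨c, hcS⟩, ?_⟩
    have hcdvd_s : c ∣ s := hassoc.symm.dvd.trans hr_dvd
    obtain ⟨s', hs'⟩ := hcdvd_s
    have hc0 : c ≠ 0 :=
      (UniqueFactorizationMonoid.irreducible_of_factor c hcmem).ne_zero
    have htc : t ⟨c, hcS⟩ = g * s' := by
      have h1 : μ = c * (g * s') := by rw [hs, hs']; ring
      have h2 := ht ⟨c, hcS⟩
      exact mul_left_cancel₀ hc0 (by rw [← h2, h1])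
    rw [hW]
    simp only [LinearMap.mem_ker, Matrix.mulVecLin_apply]
    rw [htc, show g * s' = s' * g by ring, _root_.map_mul, ← Matrix.mulVec_mulVec, hgv,
      Matrix.mulVec_zero]
  -- conclude via the covering theorem
  have hunion : ⋃ c, ((W c : Set (Fin n → K))) = Set.univ := by
    rw [Set.eq_univ_iff_forall]
    intro v
    obtain ⟨c, hc⟩ := hcover v
    exact Set.mem_iUnion.mpr ⟨c, hc⟩
  obtain ⟨c, hc⟩ := Subspace.exists_eq_top_of_iUnion_eq_univ hunion
  -- then aeval A (t c) = 0, contradicting minimality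
  have hzero : Polynomial.aeval A (t c) = 0 := by
    ext i j
    have h1 : Matrix.mulVecLin (Polynomial.aeval A (t c)) (Pi.single j 1) = 0 := by
      have : (Pi.single j 1 : Fin n → K) ∈ W c := by rw [hc]; trivial
      simpa [hW, LinearMap.mem_ker] using this
    have h2 := congrFun h1 i
    simpa [Matrix.mulVecLin_apply, Matrix.mulVec_single] using h2
  have hdvd2 : μ ∣ t c := minpoly.dvd K A hzero
  have htc0 : t c ≠ 0 := by
    intro h
    exact hμ0 (by rw [ht c, h, mul_zero])
  have hcdeg : (c.1).natDegree ≠ 0 := by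
    have := (UniqueFactorizationMonoid.irreducible_of_factor c.1
      (Multiset.mem_toFinset.mp c.2)).natDegree_pos
    omega
  have h3 : μ.natDegree = (c.1).natDegree + (t c).natDegree := by
    rw [ht c, Polynomial.natDegree_mul (fun h => hμ0 (by rw [ht c, h, zero_mul])) htc0]
  have h4 := Polynomial.natDegree_le_of_dvd hdvd2 htc0
  omega

end cyclic

lemma DVR.infinite_o {O : Type*} [CommRing O] [IsDomain O] [IsDiscreteValuationRing O] :
    Infinite O := by
  obtain ⟨ϖ, hϖ⟩ := IsDiscreteValuationRing.exists_irreducible O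
  exact Infinite.of_injective (fun k : ℕ => ϖ ^ k)
    (pow_injective_of_not_isUnit hϖ.not_isUnit hϖ.ne_zero)

lemma monic_dvd_eq {K : Type*} [Field K] {p q : K[X]} (hp : p.Monic) (hq : q.Monic)
    (hdvd : p ∣ q) (hdeg : q.natDegree ≤ p.natDegree) : p = q := by
  obtain ⟨t, ht⟩ := hdvd
  have ht0 : t ≠ 0 := fun h => hq.ne_zero (by rw [ht, h, mul_zero])
  have hdeg2 : q.natDegree = p.natDegree + t.natDegree := by
    rw [ht]; exact Polynomial.natDegree_mul hp.ne_zero ht0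
  have htdeg : t.natDegree = 0 := by omega
  have htC : t = C (t.coeff 0) := Polynomial.eq_C_of_natDegree_eq_zero htdeg
  have hlc : q.leadingCoeff = p.leadingCoeff * t.leadingCoeff := by
    rw [ht, Polynomial.leadingCoeff_mul]
  rw [hp.leadingCoeff, hq.leadingCoeff, one_mul] at hlc
  have ht1 : t = 1 := by
    rw [htC]
    rw [Polynomial.leadingCoeff, htdeg] at hlc
    rw [← hlc, Polynomial.C_1]
  rw [ht, ht1, mul_one]

/-- The Krylov matrix of `Y + E` (entries of `E` in the maximal ideal) applied to the
last basis vector has determinant outside of the maximal ideal. -/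
lemma det_krylov_not_mem {O : Type*} [CommRing O] [IsLocalRing O] {n : ℕ}
    (E : Matrix (Fin n) (Fin n) O) (hE : ∀ i j, E i j ∈ maximalIdeal O) :
    (Matrix.of fun i (k : Fin n) =>
        (((Ymat n O + E) ^ (k : ℕ)) *ᵥ (fun i : Fin n => if (i : ℕ) = n - 1 then 1 else 0)) i).det
      ∉ maximalIdeal O := by
  set W := Ymat n O + E with hWdef
  set v₀ : Fin n → O := fun i => if (i : ℕ) = n - 1 then 1 else 0 with hv₀
  set B := Matrix.of fun i (k : Fin n) => ((W ^ (k : ℕ)) *ᵥ v₀) i with hB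
  intro hmem
  set π := IsLocalRing.residue O with hπ
  have hres : π B.det = 0 := Ideal.Quotient.eq_zero_iff_mem.mpr hmem
  have hdet : π B.det = (B.map π).det := by rw [RingHom.map_det, RingHom.mapMatrix_apply]
  have hWπ : W.map π = Ymat n (ResidueField O) := by
    ext i j
    rw [hWdef]
    simp only [Matrix.map_apply, Matrix.add_apply, map_add]
    rw [show π (E i j) = 0 from Ideal.Quotient.eq_zero_iff_mem.mpr (hE i j), add_zero]
    have := congrFun (congrFun (congrArg (fun M => M) (Ymat_map (n := n) π)) i) j
    simpa [Matrix.map_apply] using this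
  have hBπ : B.map π = (Fin.revPerm (n := n)).permMatrix (ResidueField O) := by
    ext i k
    show π ((W ^ (k : ℕ) *ᵥ v₀) i) = _
    have h1 : π ((W ^ (k : ℕ) *ᵥ v₀) i)
        = (((W.map π) ^ (k : ℕ)) *ᵥ (fun j => π (v₀ j))) i := by
      rw [pow_map, mulVec_map_apply]
    rw [h1, hWπ]
    have h2 : (fun j : Fin n => π (v₀ j)) = fun j : Fin n => if (j : ℕ) = n - 1 then 1 else 0 := by
      funext j; simp [hv₀, apply_ite π]
    rw [h2, Ymat_pow_mulVec]
    simp only [Equiv.Perm.permMatrix, PEquiv.toMatrix_apply, Equiv.toPEquiv_apply,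
      Option.mem_def, Option.some.injEq]
    have hiLt : (i : ℕ) < n := i.isLt
    have hkLt : (k : ℕ) < n := k.isLt
    by_cases h : (i : ℕ) + (k : ℕ) = n - 1
    · rw [if_pos h, if_pos (show Fin.revPerm i = k by
        apply Fin.ext; simp only [Fin.revPerm_apply, Fin.val_rev]; omega)]
    · rw [if_neg h, if_neg]
      intro hk
      apply h
      have h3 : (k : Fin n) = Fin.rev i := hk.symm
      have h4 := congrArg Fin.val h3
      simp [Fin.rev] at h4
      omega
  rw [hdet, hBπ, Matrix.det_permutation] at hres
  rcases Int.units_eq_one_or (Equiv.Perm.sign (Fin.revPerm (n := n))) with h | h <;>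
    rw [h] at hres <;> simp at hres

/-- Let `O` be a discrete valuation ring with maximal ideal `m` and
fraction field `F`, let `F̄` be an algebraic closure of `F`, and `n ≥ 1`. For
`Z ∈ Mₙ(F)` the following are equivalent: (a) there is `g ∈ GLₙ(F̄)` such that every
entry of `g Z g⁻¹ - Y` lies in `m`; (b) the minimal polynomial of `Z` equals its
characteristic polynomial and every coefficient of degree `< n` of the characteristic
polynomial of `Z` lies in `m`. -/
theorem stmt4 {O : Type*} [CommRing O] [IsDomain O] [IsDiscreteValuationRing O]
    {F : Type*} [Field F] [Algebra O F] [IsFractionRing O F]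
    (n : ℕ) (hn : 1 ≤ n) (Z : Matrix (Fin n) (Fin n) F) :
    (∃ g : GL (Fin n) (AlgebraicClosure F), ∀ i j : Fin n,
        ∃ c ∈ maximalIdeal O,
          ((g : Matrix (Fin n) (Fin n) (AlgebraicClosure F)) *
              Z.map (algebraMap F (AlgebraicClosure F)) *
              ((g⁻¹ : GL (Fin n) (AlgebraicClosure F)) :
                Matrix (Fin n) (Fin n) (AlgebraicClosure F))
            - Ymat n (AlgebraicClosure F)) i j
            = algebraMap F (AlgebraicClosure F) (algebraMap O F c)) ↔
      (minpoly F Z = Z.charpoly ∧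
        ∀ i < n, ∃ c ∈ maximalIdeal O, Z.charpoly.coeff i = algebraMap O F c) := by
  classical
  set Fbar := AlgebraicClosure F with hFbar
  set φ : F →+* Fbar := algebraMap F Fbar with hφ
  set ψ : O →+* Fbar := φ.comp (algebraMap O F) with hψ
  have hφinj : Function.Injective φ := φ.injective
  have hOFinj : Function.Injective (algebraMap O F) := IsFractionRing.injective O F
  have hψinj : Function.Injective ψ := hφinj.comp hOFinj
  have hcpm : Z.charpoly.Monic := Matrix.charpoly_monic Z
  have hcdeg : Z.charpoly.natDegree = n := by
    rw [Matrix.charpoly_natDegree_eq_dim, Fintype.card_fin]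
  have hint : IsIntegral F Z := IsIntegral.of_finite F Z
  have hmono : (minpoly F Z).Monic := minpoly.monic hint
  constructor
  · rintro ⟨g, hg⟩
    choose Ec hEm hEeq using hg
    set E : Matrix (Fin n) (Fin n) O := Matrix.of Ec with hE
    set W : Matrix (Fin n) (Fin n) O := Ymat n O + E with hW
    have hgZ : ((g : Matrix (Fin n) (Fin n) Fbar) * Z.map φ *
        ((g⁻¹ : GL (Fin n) Fbar) : Matrix (Fin n) (Fin n) Fbar)) = W.map ψ := by
      ext i j
      have h1 := hEeq i j
      rw [Matrix.sub_apply, sub_eq_iff_eq_add] at h1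
      have h3 : (W.map ψ) i j = Ymat n Fbar i j + ψ (Ec i j) := by
        rw [hW]
        simp only [Matrix.map_apply, Matrix.add_apply, map_add, hE, Matrix.of_apply]
        congr 1
        simp [Ymat, apply_ite ψ]
      rw [h3]
      exact h1.trans (add_comm _ _)
    have hWres : W.map (IsLocalRing.residue O) = Ymat n (ResidueField O) := by
      ext i j
      rw [hW]
      simp only [Matrix.map_apply, Matrix.add_apply, map_add]
      rw [show IsLocalRing.residue O (E i j) = 0 from
        Ideal.Quotient.eq_zero_iff_mem.mpr (hEm i j), add_zero]
      have := congrFun (congrFun (Ymat_map (n := n) (IsLocalRing.residue O)) i) j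
      simpa [Matrix.map_apply] using this
    have hcp : Z.charpoly.map φ = (W.charpoly).map ψ := by
      rw [← Matrix.charpoly_map Z φ, ← _root_.charpoly_units_conj g (Z.map φ), hgZ,
        Matrix.charpoly_map]
    have hWcoeff : ∀ i < n, W.charpoly.coeff i ∈ maximalIdeal O := by
      intro i hi
      have h1 : (W.charpoly).map (IsLocalRing.residue O) = (X : (ResidueField O)[X]) ^ n := by
        rw [← Matrix.charpoly_map, hWres, Ymat_charpoly]
      have h2 : IsLocalRing.residue O (W.charpoly.coeff i) = 0 := by
        have h3 := congrArg (fun p => Polynomial.coeff p i) h1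
        simpa [Polynomial.coeff_map, Polynomial.coeff_X_pow, Nat.ne_of_lt hi] using h3
      exact Ideal.Quotient.eq_zero_iff_mem.mp h2
    constructor
    · -- minpoly equals charpoly
      have hdvd := Matrix.minpoly_dvd_charpoly Z
      suffices h : n ≤ (minpoly F Z).natDegree by
        exact monic_dvd_eq hmono hcpm hdvd (by omega)
      by_contra hlt
      push_neg at hlt
      set μ' := (minpoly F Z).map φ with hμ'
      have hμ'deg : μ'.natDegree < n := by
        rw [hμ', Polynomial.natDegree_map_eq_of_injective hφinj]
        exact hlt
      have haevZ : Polynomial.aeval (Z.map φ) μ' = 0 := by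
        rw [hμ', hφ]
        have h1 : Z.map (algebraMap F Fbar)
            = (AlgHom.mapMatrix (Algebra.ofId F Fbar)) Z := rfl
        rw [Polynomial.aeval_map_algebraMap, h1, Polynomial.aeval_algHom_apply,
          minpoly.aeval, map_zero]
      have haev : Polynomial.aeval (W.map ψ) μ' = 0 := by
        rw [← hgZ, aeval_units_conj, haevZ, mul_zero, zero_mul]
      set v : Fin n → Fbar := fun j => ψ (if (j : ℕ) = n - 1 then 1 else 0) with hv
      set B := Matrix.of fun i (k : Fin n) => (((W.map ψ) ^ (k : ℕ)) *ᵥ v) i with hB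
      have hdetB : B.det ≠ 0 := by
        have hBmap : B = (Matrix.of fun i (k : Fin n) =>
            ((W ^ (k : ℕ)) *ᵥ (fun i : Fin n => if (i : ℕ) = n - 1 then 1 else 0)) i).map ψ := by
          ext i k
          show (((W.map ψ) ^ (k : ℕ)) *ᵥ v) i = ψ (((W ^ (k : ℕ)) *ᵥ _) i)
          rw [← mulVec_map_apply ψ, pow_map]
        rw [hBmap, ← RingHom.mapMatrix_apply, ← RingHom.map_det]
        intro h0
        apply det_krylov_not_mem E hEm
        have : (Matrix.of fun i (k : Fin n) =>
            ((W ^ (k : ℕ)) *ᵥ (fun i : Fin n => if (i : ℕ) = n - 1 then 1 else 0)) i).det = 0 :=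
          hψinj (by rw [h0, map_zero])
        rw [this]
        exact Ideal.zero_mem _
      have h3 : B *ᵥ (fun k : Fin n => μ'.coeff (k : ℕ)) = 0 := by
        rw [hB, ← aeval_mulVec_eq (W.map ψ) v μ' hμ'deg, haev, Matrix.zero_mulVec]
      have hu : IsUnit B.det := Ne.isUnit hdetB
      have hx : (fun k : Fin n => μ'.coeff (k : ℕ)) = 0 := by
        have h4 : B⁻¹ *ᵥ (B *ᵥ (fun k : Fin n => μ'.coeff (k : ℕ))) = 0 := by
          rw [h3, Matrix.mulVec_zero]
        rwa [Matrix.mulVec_mulVec, Matrix.nonsing_inv_mul B hu, Matrix.one_mulVec] at h4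
      have hne : μ' ≠ 0 := (hmono.map φ).ne_zero
      have h5 : μ'.coeff μ'.natDegree = 0 := by
        have := congrFun hx ⟨μ'.natDegree, by omega⟩
        simpa using this
      exact hne (Polynomial.leadingCoeff_eq_zero.mp h5)
    · -- coefficients
      intro i hi
      refine ⟨W.charpoly.coeff i, hWcoeff i hi, ?_⟩
      apply hφinj
      have h1 := congrArg (fun p => Polynomial.coeff p i) hcp
      simpa [Polynomial.coeff_map, hψ] using h1
  · rintro ⟨hmin, hcoeff⟩
    haveI hinfO : Infinite O := DVR.infinite_o
    haveI hinfF : Infinite F := Infinite.of_injective (algebraMap O F) hOFinj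
    obtain ⟨v, hv⟩ := exists_cyclic Z (by rw [hmin, hcdeg])
    set B0 := Matrix.of fun i (k : Fin n) => ((Z ^ (k : ℕ)) *ᵥ v) i with hB0
    set B := Matrix.of fun i (k : Fin n) => ((Z ^ (n - 1 - (k : ℕ))) *ᵥ v) i with hB
    have hBsub : B = B0.submatrix id Fin.revPerm := by
      ext i k
      show ((Z ^ (n - 1 - (k : ℕ))) *ᵥ v) i = ((Z ^ ((Fin.revPerm k : Fin n) : ℕ)) *ᵥ v) i
      congr 2
      simp only [Fin.revPerm_apply, Fin.val_rev]
      omega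
    have hdB : B.det ≠ 0 := by
      rw [hBsub, Matrix.det_permute']
      rcases Int.units_eq_one_or (Equiv.Perm.sign (Fin.revPerm (n := n))) with h | h <;>
        rw [h] <;> simpa using hv
    set p := Z.charpoly with hp
    set Cm : Matrix (Fin n) (Fin n) F := Matrix.of fun i j =>
      if (j : ℕ) = 0 then -(p.coeff (n - 1 - (i : ℕ))) else Ymat n F i j with hCm
    -- Cayley-Hamilton
    have hCH : (Z ^ n) *ᵥ v = -(∑ k : Fin n, p.coeff (k : ℕ) • ((Z ^ (k : ℕ)) *ᵥ v)) := by
      have h0 : Polynomial.aeval Z p = 0 := Matrix.aeval_self_charpoly Z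
      have h1 : Polynomial.aeval Z p = ∑ i ∈ Finset.range (n + 1), p.coeff i • Z ^ i :=
        aeval_eq_sum_range' (by omega) Z
      rw [Finset.sum_range_succ] at h1
      have hc : p.coeff n = 1 := by
        rw [← hcdeg]
        exact hcpm.coeff_natDegree
      rw [hc, one_smul, h0] at h1
      have h2 : Z ^ n = -(∑ i ∈ Finset.range n, p.coeff i • Z ^ i) :=
        eq_neg_of_add_eq_zero_right h1.symm
      rw [h2, Matrix.neg_mulVec]
      congr 1
      rw [_root_.sum_mulVec, ← Fin.sum_univ_eq_sum_range (fun k => (p.coeff k • Z ^ k) *ᵥ v)]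
      exact Finset.sum_congr rfl fun k _ => by rw [Matrix.smul_mulVec]
    have hkey : Z * B = B * Cm := by
      ext i j
      have hjLt : (j : ℕ) < n := j.isLt
      have hLHS : (Z * B) i j = ((Z ^ ((n - 1 - (j : ℕ)) + 1)) *ᵥ v) i := by
        rw [Matrix.mul_apply]
        have : ((Z ^ ((n - 1 - (j : ℕ)) + 1)) *ᵥ v) i
            = (Z *ᵥ ((Z ^ (n - 1 - (j : ℕ))) *ᵥ v)) i := by
          rw [Matrix.mulVec_mulVec, ← pow_succ']
        rw [this]
        simp only [Matrix.mulVec, dotProduct, hB, Matrix.of_apply]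
      rw [hLHS, Matrix.mul_apply]
      by_cases hj : (j : ℕ) = 0
      · -- first column
        have hexp : (n - 1 - (j : ℕ)) + 1 = n := by omega
        rw [hexp]
        have hR : ∑ l : Fin n, B i l * Cm l j
            = -(∑ l : Fin n, p.coeff ((l : ℕ)) • ((Z ^ ((l : ℕ))) *ᵥ v)) i := by
          rw [show -(∑ l : Fin n, p.coeff ((l : ℕ)) • ((Z ^ ((l : ℕ))) *ᵥ v)) i
              = ∑ l : Fin n, -(p.coeff ((l : ℕ)) * (((Z ^ ((l : ℕ))) *ᵥ v) i)) by
            simp [Finset.sum_apply, Finset.sum_neg_distrib]]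
          rw [← Equiv.sum_comp Fin.revPerm (fun l => -(p.coeff ((l : ℕ)) * (((Z ^ ((l : ℕ))) *ᵥ v) i)))]
          apply Finset.sum_congr rfl
          intro l _
          have hrev : ((Fin.revPerm l : Fin n) : ℕ) = n - 1 - (l : ℕ) := by
            simp only [Fin.revPerm_apply, Fin.val_rev]; omega
          rw [hrev, hB, hCm]
          simp only [Matrix.of_apply, if_pos hj]
          ring
        rw [hR]
        have := congrFun hCH i
        simpa using this
      · -- other columns
        rw [Finset.sum_eq_single (⟨(j : ℕ) - 1, by omega⟩ : Fin n)]
        · rw [hB, hCm]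
          simp only [Matrix.of_apply, if_neg hj, Ymat]
          rw [if_pos (show (j : ℕ) = ((⟨(j : ℕ) - 1, by omega⟩ : Fin n) : ℕ) + 1 from by
            show (j : ℕ) = (j : ℕ) - 1 + 1; omega), mul_one]
          rw [show n - 1 - ((⟨(j : ℕ) - 1, by omega⟩ : Fin n) : ℕ) = (n - 1 - (j : ℕ)) + 1 from by
            show n - 1 - ((j : ℕ) - 1) = (n - 1 - (j : ℕ)) + 1; omega]
        · intro b _ hb
          rw [hCm]
          simp only [Matrix.of_apply, if_neg hj, Ymat]
          rw [if_neg, mul_zero]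
          intro hc
          apply hb
          apply Fin.ext
          show (b : ℕ) = (j : ℕ) - 1
          omega
        · intro h; exact absurd (Finset.mem_univ _) h
    -- move to the algebraic closure
    have hdetφ : (B.map φ).det ≠ 0 := by
      rw [← RingHom.mapMatrix_apply, ← RingHom.map_det]
      intro h
      exact hdB (hφinj (by rw [h, map_zero]))
    have hudet : IsUnit (B.map φ).det := Ne.isUnit hdetφ
    set u : (Matrix (Fin n) (Fin n) Fbar)ˣ := Matrix.nonsingInvUnit (B.map φ) hudet with hu
    refine ⟨u⁻¹, ?_⟩
    intro i j
    have hcoe1 : ((u⁻¹ : GL (Fin n) Fbar) : Matrix (Fin n) (Fin n) Fbar) = (B.map φ)⁻¹ := rfl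
    have hcoe2 : (((u⁻¹)⁻¹ : GL (Fin n) Fbar) : Matrix (Fin n) (Fin n) Fbar) = B.map φ := by
      rw [inv_inv]
      rfl
    have hkey' : Z.map φ * B.map φ = B.map φ * Cm.map φ := by
      rw [← Matrix.map_mul, ← Matrix.map_mul, hkey]
    have hconj : (B.map φ)⁻¹ * Z.map φ * (B.map φ) = Cm.map φ := by
      rw [mul_assoc, hkey', ← mul_assoc, Matrix.nonsing_inv_mul _ hudet, one_mul]
    rw [hcoe1, hcoe2, hconj]
    by_cases hj : (j : ℕ) = 0
    · obtain ⟨c, hcm, hc⟩ := hcoeff (n - 1 - (i : ℕ)) (by omega)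
      refine ⟨-c, neg_mem hcm, ?_⟩
      rw [Matrix.sub_apply, Matrix.map_apply, hCm]
      simp only [Matrix.of_apply, if_pos hj]
      rw [show Ymat n Fbar i j = 0 by rw [Ymat]; rw [if_neg (by omega)], sub_zero, hc]
      rw [map_neg, map_neg, map_neg]
    · refine ⟨0, Ideal.zero_mem _, ?_⟩
      rw [Matrix.sub_apply, Matrix.map_apply, hCm]
      simp only [Matrix.of_apply, if_neg hj]
      rw [show φ (Ymat n F i j) = Ymat n Fbar i j by
        have := congrFun (congrFun (Ymat_map (n := n) φ) i) j
        simpa [Matrix.map_apply] using this]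
      simp
      exact sub_self _
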